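/- arXiv:2209.01630 — 5 statements merged into one kernel-verified Lean document; each statement's English description precedes it below -/
import Mathlib

section
/- Let S = (Sₙ) be a sequence of real symmetric p×p matrices satisfying a linear recurrence of order r whose minimal polynomial P_S has r distinct real roots λ₀,…,λ_{r−1}, so Sₙ = ∑_{q} T_q λ_qⁿ for some real matrices T_q. If the block Hankel matrix H(r−1) = (S_{i+j})_{0≤i,j≤r−1} is positive semidefinite, then H(n) is positive semidefinite for every n ≥ r. -/
open Matrix

/-- If a recursive matrix sequence has the Binet representation
`Sₙ = ∑_q λ_qⁿ • T_q` with `r` distinct real roots and the block Hankel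
matrix `H(r−1)` is positive semidefinite, then `H(n)` is positive
semidefinite for all `n ≥ r`. -/
theorem hankel_psd_extension (p r : ℕ)
    (S : ℕ → Matrix (Fin p) (Fin p) ℝ) (hsym : ∀ n, (S n).IsSymm)
    (lam : Fin r → ℝ) (hlam : Function.Injective lam)
    (T : Fin r → Matrix (Fin p) (Fin p) ℝ)
    (hrep : ∀ n, S n = ∑ q, lam q ^ n • T q)
    (hH : ∀ c : Fin r → Fin p → ℝ,
      0 ≤ ∑ i, ∑ j, c i ⬝ᵥ (S (i.1 + j.1)).mulVec (c j)) :
    ∀ n, r ≤ n → ∀ c : Fin (n + 1) → Fin p → ℝ,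
      0 ≤ ∑ i, ∑ j, c i ⬝ᵥ (S (i.1 + j.1)).mulVec (c j) := by
  -- helper: dot product and mulVec commute with finite sums
  have hds : ∀ {m : ℕ} (u : Fin p → ℝ) (g : Fin m → Fin p → ℝ),
      (u ⬝ᵥ ∑ j, g j) = ∑ j, u ⬝ᵥ g j := by
    intro m u g
    simp only [dotProduct, Finset.sum_apply, Finset.mul_sum]
    exact Finset.sum_comm
  have hsd : ∀ {m : ℕ} (u : Fin p → ℝ) (g : Fin m → Fin p → ℝ),
      ((∑ j, g j) ⬝ᵥ u) = ∑ j, g j ⬝ᵥ u := by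
    intro m u g
    simp only [dotProduct, Finset.sum_apply, Finset.sum_mul]
    exact Finset.sum_comm
  have hms : ∀ {m : ℕ} (M : Matrix (Fin p) (Fin p) ℝ) (g : Fin m → Fin p → ℝ),
      M.mulVec (∑ j, g j) = ∑ j, M.mulVec (g j) := by
    intro m M g
    simp only [← Matrix.mulVecLin_apply, map_sum]
  -- key identity: the quadratic form factors through the roots
  have key : ∀ (m : ℕ) (c : Fin m → Fin p → ℝ),
      ∑ i, ∑ j, c i ⬝ᵥ (S (i.1 + j.1)).mulVec (c j)
        = ∑ q, (∑ i, lam q ^ i.1 • c i) ⬝ᵥ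
            (T q).mulVec (∑ j, lam q ^ j.1 • c j) := by
    intro m c
    have L : ∀ (i j : Fin m), c i ⬝ᵥ (S (i.1 + j.1)).mulVec (c j)
        = ∑ q, (lam q ^ i.1 * lam q ^ j.1) * (c i ⬝ᵥ (T q).mulVec (c j)) := by
      intro i j
      rw [hrep]
      have : (∑ q, lam q ^ (i.1 + j.1) • T q).mulVec (c j)
          = ∑ q, lam q ^ (i.1 + j.1) • (T q).mulVec (c j) := by
        funext k
        simp only [Matrix.mulVec, dotProduct, Finset.sum_apply, Matrix.sum_apply,
          Pi.smul_apply, Matrix.smul_apply, smul_eq_mul, Finset.sum_mul]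
        rw [Finset.sum_comm]
        simp [Finset.mul_sum, mul_assoc]
      rw [this, hds]
      refine Finset.sum_congr rfl fun q _ => ?_
      rw [dotProduct_smul, pow_add]
      simp [smul_eq_mul, mul_assoc]
    have R : ∀ q : Fin r, (∑ i, lam q ^ i.1 • c i) ⬝ᵥ
            (T q).mulVec (∑ j, lam q ^ j.1 • c j)
        = ∑ i, ∑ j, (lam q ^ i.1 * lam q ^ j.1) * (c i ⬝ᵥ (T q).mulVec (c j)) := by
      intro q
      rw [hms, hsd]
      refine Finset.sum_congr rfl fun i _ => ?_
      rw [smul_dotProduct, hds]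
      rw [Finset.smul_sum]
      refine Finset.sum_congr rfl fun j _ => ?_
      rw [Matrix.mulVec_smul, dotProduct_smul]
      simp only [smul_eq_mul]; ring
    simp only [L, R]
    refine (Finset.sum_congr rfl fun i _ => Finset.sum_comm).trans ?_
    exact Finset.sum_comm
  -- the quadratic form ∑_q wᵀ T_q w is nonneg for arbitrary w, by Vandermonde
  have pos : ∀ w : Fin r → Fin p → ℝ, 0 ≤ ∑ q, w q ⬝ᵥ (T q).mulVec (w q) := by
    intro w
    have hdet : (Matrix.vandermonde lam).det ≠ 0 := by
      rw [Matrix.det_vandermonde]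
      refine Finset.prod_ne_zero_iff.mpr fun i _ =>
        Finset.prod_ne_zero_iff.mpr fun j hj => sub_ne_zero.mpr fun h => ?_
      have : j ≠ i := (Finset.mem_Ioi.mp hj).ne'
      exact this (hlam h)
    set C := (Matrix.vandermonde lam)⁻¹ * Matrix.of w with hC
    have hVC : Matrix.vandermonde lam * C = Matrix.of w :=
      Matrix.mul_nonsing_inv_cancel_left _ _ (isUnit_iff_ne_zero.mpr hdet)
    have hw : ∀ q, (∑ i, lam q ^ i.1 • C i) = w q := by
      intro q
      funext k
      have h2 := congrFun (congrFun hVC q) k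
      simp only [Matrix.mul_apply, Matrix.vandermonde, Matrix.of_apply] at h2
      simpa [Finset.sum_apply, Pi.smul_apply, smul_eq_mul] using h2
    have h0 := hH fun i => C i
    rw [key r fun i => C i] at h0
    simpa only [hw] using h0
  intro n hn c
  rw [key (n + 1) c]
  exact pos _
end

section
/- Let S = (Sₙ) be a sequence of real symmetric p×p matrices satisfying a linear recurrence of order r, with H(r−1) = (S_{i+j})_{0≤i,j≤r−1} positive semidefinite, and suppose the infinite block Hankel form is positive semidefinite (i.e., all finite sections H(m) ⪰ 0). Then for any polynomial P ∈ ℝ[X] and any n ≥ 1: Pⁿ annihilates S if and only if P annihilates S. -/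
open Polynomial Matrix

/-- The polynomial `P` annihilates the matrix sequence `S`. -/
def AnnM {p : ℕ} (S : ℕ → Matrix (Fin p) (Fin p) ℝ) (P : Polynomial ℝ) : Prop :=
  ∀ n : ℕ, ∑ k ∈ Finset.range (P.natDegree + 1), P.coeff k • S (n + k) = 0

section Aux

variable {M : Type*} [AddCommMonoid M] [Module ℝ M]

lemma sum_ext' (P : Polynomial ℝ) (g : ℕ → M) {N : ℕ} (hN : P.natDegree < N) :
    ∑ k ∈ Finset.range N, P.coeff k • g k
      = ∑ k ∈ Finset.range (P.natDegree + 1), P.coeff k • g k := by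
  refine (Finset.sum_subset (Finset.range_subset_range.2 hN) ?_).symm
  intro k _ hk
  rw [Polynomial.coeff_eq_zero_of_natDegree_lt, zero_smul]
  simp only [Finset.mem_range] at hk
  omega

lemma conv' (P Q : Polynomial ℝ) (g : ℕ → M) {N : ℕ}
    (hN : P.natDegree + Q.natDegree < N) :
    ∑ k ∈ Finset.range N, (P * Q).coeff k • g k
      = ∑ i ∈ Finset.range (P.natDegree + 1), ∑ j ∈ Finset.range (Q.natDegree + 1),
          (P.coeff i * Q.coeff j) • g (i + j) := by
  have h1 : ∀ k, (P * Q).coeff k • g k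
      = ∑ pq ∈ Finset.HasAntidiagonal.antidiagonal k, (P.coeff pq.1 * Q.coeff pq.2) • g (pq.1 + pq.2) := by
    intro k
    rw [Polynomial.coeff_mul, Finset.sum_smul]
    refine Finset.sum_congr rfl fun pq hpq => ?_
    rw [Finset.HasAntidiagonal.mem_antidiagonal.1 hpq]
  simp_rw [h1]
  rw [← Finset.sum_biUnion (by
    intro x _ y _ hxy
    simp only [Finset.disjoint_left]
    intro a ha ha'
    exact hxy ((Finset.HasAntidiagonal.mem_antidiagonal.1 ha).symm.trans (Finset.HasAntidiagonal.mem_antidiagonal.1 ha'))),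
    ← Finset.sum_product']
  refine (Finset.sum_subset ?_ ?_).symm
  · intro pq hpq
    simp only [Finset.mem_product, Finset.mem_range] at hpq
    rw [Finset.mem_biUnion]
    exact ⟨pq.1 + pq.2, Finset.mem_range.2 (by omega), Finset.HasAntidiagonal.mem_antidiagonal.2 rfl⟩
  · intro pq _ hpq
    simp only [Finset.mem_product, Finset.mem_range, not_and_or, not_lt] at hpq
    rcases hpq with h | h
    · rw [Polynomial.coeff_eq_zero_of_natDegree_lt (by omega), zero_mul, zero_smul]
    · rw [Polynomial.coeff_eq_zero_of_natDegree_lt (p := Q) (by omega), mul_zero, zero_smul]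

end Aux

section MatAux

variable {p : ℕ}

lemma symm_dot {A : Matrix (Fin p) (Fin p) ℝ} (hA : A.IsSymm) (u v : Fin p → ℝ) :
    u ⬝ᵥ A.mulVec v = v ⬝ᵥ A.mulVec u := by
  simp only [dotProduct, Matrix.mulVec, dotProduct, Finset.mul_sum]
  rw [Finset.sum_comm]
  refine Finset.sum_congr rfl fun i _ => Finset.sum_congr rfl fun j _ => ?_
  have : A j i = A i j := by
    conv_lhs => rw [← hA]
    rfl
  rw [this]; ring

lemma eq_zero_of_forall_dot (A : Matrix (Fin p) (Fin p) ℝ)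
    (h : ∀ u v : Fin p → ℝ, u ⬝ᵥ A.mulVec v = 0) : A = 0 := by
  ext i j
  have := h (Pi.single i 1) (Pi.single j 1)
  simpa [Matrix.mulVec_single, single_dotProduct] using this

lemma dot_sum (N : ℕ) (c : ℕ → ℝ) (F : ℕ → Matrix (Fin p) (Fin p) ℝ) (u v : Fin p → ℝ) :
    u ⬝ᵥ (∑ k ∈ Finset.range N, c k • F k).mulVec v
      = ∑ k ∈ Finset.range N, c k * (u ⬝ᵥ (F k).mulVec v) := by
  induction N with
  | zero => simp
  | succ n ih =>
    rw [Finset.sum_range_succ, Finset.sum_range_succ, ← ih, Matrix.add_mulVec,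
      dotProduct_add, Matrix.smul_mulVec, dotProduct_smul, smul_eq_mul]

lemma shrinkQ (Q : Polynomial ℝ) {N : ℕ} (hN : Q.natDegree < N) (g : ℕ → ℝ) :
    ∑ j ∈ Finset.range N, Q.coeff j * g j
      = ∑ j ∈ Finset.range (Q.natDegree + 1), Q.coeff j * g j := by
  simpa [smul_eq_mul] using sum_ext' Q g hN

lemma quad (A : Matrix (Fin p) (Fin p) ℝ) (a b c d : ℝ) (u v : Fin p → ℝ) :
    (a • v + b • u) ⬝ᵥ A.mulVec (c • v + d • u)
      = a * c * (v ⬝ᵥ A.mulVec v) + a * d * (v ⬝ᵥ A.mulVec u)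
        + b * c * (u ⬝ᵥ A.mulVec v) + b * d * (u ⬝ᵥ A.mulVec u) := by
  simp only [Matrix.mulVec_add, Matrix.mulVec_smul, dotProduct_add, add_dotProduct,
    dotProduct_smul, smul_dotProduct, smul_eq_mul]
  ring

end MatAux

section Main

variable {p : ℕ} (S : ℕ → Matrix (Fin p) (Fin p) ℝ)

/-- Multiplication preserves annihilation. -/
lemma annM_mul {P : Polynomial ℝ} (hP : AnnM S P) (Q : Polynomial ℝ) :
    AnnM S (Q * P) := by
  intro n
  have hdeg : (Q * P).natDegree < Q.natDegree + P.natDegree + 1 :=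
    Nat.lt_succ_of_le (Polynomial.natDegree_mul_le)
  rw [← sum_ext' (Q * P) (fun k => S (n + k)) hdeg,
    conv' Q P (fun k => S (n + k)) (Nat.lt_succ_self _)]
  refine Finset.sum_eq_zero fun i _ => ?_
  have : ∀ j, (Q.coeff i * P.coeff j) • S (n + (i + j))
      = Q.coeff i • (P.coeff j • S (n + i + j)) := by
    intro j
    rw [mul_smul, ← add_assoc]
  simp_rw [this, ← Finset.smul_sum, hP (n + i), smul_zero]

/-- The key square-root step, using positive semidefiniteness. -/
lemma annM_of_annM_sq (hsym : ∀ n, (S n).IsSymm)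
    (hH : ∀ m : ℕ, ∀ c : Fin (m + 1) → Fin p → ℝ,
      0 ≤ ∑ i, ∑ j, c i ⬝ᵥ (S (i.1 + j.1)).mulVec (c j))
    {Q : Polynomial ℝ} (hQ : AnnM S (Q ^ 2)) : AnnM S Q := by
  intro n
  set d := Q.natDegree with hd
  -- the matrix A0 = ∑ (Q*Q).coeff k • S k is zero
  have hA0 : ∑ k ∈ Finset.range (2 * d + 1), (Q * Q).coeff k • S k = 0 := by
    have h2 : (Q * Q).natDegree < 2 * d + 1 :=
      Nat.lt_succ_of_le (le_trans Polynomial.natDegree_mul_le (by omega))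
    rw [sum_ext' (Q * Q) S h2]
    have := hQ 0
    rw [sq] at this
    simpa using this
  -- quadratic-form expansion
  set m := d + n with hm
  -- target matrix with extended range
  set T : Matrix (Fin p) (Fin p) ℝ := ∑ k ∈ Finset.range (m + 1), Q.coeff k • S (n + k)
    with hT
  have hTzero : T = 0 := by
    refine eq_zero_of_forall_dot T fun u v => ?_
    -- quadratic in t
    have key : ∀ t : ℝ, 0 ≤ 0 * (t * t) + (2 * (u ⬝ᵥ T.mulVec v)) * t + 0
        ∨ True := fun _ => Or.inr trivial
    have main : ∀ t : ℝ,
        0 ≤ (u ⬝ᵥ (S (n + n)).mulVec u) * (t * t) + (2 * (u ⬝ᵥ T.mulVec v)) * t + 0 := by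
      intro t
      have := hH m (fun i => Q.coeff i.1 • v + (if i.1 = n then t else 0) • u)
      -- expand
      have hnmem : n ∈ Finset.range (m + 1) := Finset.mem_range.2 (by omega)
      have hfin : ∀ g : ℕ → ℕ → ℝ, (∑ i : Fin (m + 1), ∑ j : Fin (m + 1), g i.1 j.1)
          = ∑ i ∈ Finset.range (m + 1), ∑ j ∈ Finset.range (m + 1), g i j := by
        intro g
        have h2 : ∀ i : Fin (m + 1), ∑ j : Fin (m + 1), g i.1 j.1
            = ∑ j ∈ Finset.range (m + 1), g i.1 j :=
          fun i => Fin.sum_univ_eq_sum_range (g i.1) (m + 1)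
        simp_rw [h2]
        exact Fin.sum_univ_eq_sum_range (fun i => ∑ j ∈ Finset.range (m + 1), g i j) (m + 1)
      rw [hfin (fun i j => (Q.coeff i • v + (if i = n then t else 0) • u) ⬝ᵥ
            (S (i + j)).mulVec (Q.coeff j • v + (if j = n then t else 0) • u))] at this
      simp_rw [quad, Finset.sum_add_distrib] at this
      -- the four pieces
      have hB : u ⬝ᵥ T.mulVec v
          = ∑ k ∈ Finset.range (m + 1), Q.coeff k * (u ⬝ᵥ (S (n + k)).mulVec v) :=
        dot_sum (m + 1) _ (fun k => S (n + k)) u v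
      have hT1 : ∑ i ∈ Finset.range (m + 1), ∑ j ∈ Finset.range (m + 1),
          Q.coeff i * Q.coeff j * (v ⬝ᵥ (S (i + j)).mulVec v) = 0 := by
        have inner : ∀ i, ∑ j ∈ Finset.range (m + 1),
            Q.coeff i * Q.coeff j * (v ⬝ᵥ (S (i + j)).mulVec v)
            = Q.coeff i * ∑ j ∈ Finset.range (d + 1),
                Q.coeff j * (v ⬝ᵥ (S (i + j)).mulVec v) := by
          intro i
          rw [← shrinkQ Q (show Q.natDegree < m + 1 by omega)
              (fun j => v ⬝ᵥ (S (i + j)).mulVec v), Finset.mul_sum]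
          exact Finset.sum_congr rfl fun j _ => by ring
        simp_rw [inner]
        rw [shrinkQ Q (show Q.natDegree < m + 1 by omega)]
        have hc := conv' Q Q (fun k => v ⬝ᵥ (S k).mulVec v)
          (show Q.natDegree + Q.natDegree < 2 * d + 1 by omega)
        have hzero : ∑ k ∈ Finset.range (2 * d + 1),
            (Q * Q).coeff k • (v ⬝ᵥ (S k).mulVec v) = 0 := by
          have h5 := dot_sum (2 * d + 1) (fun k => (Q * Q).coeff k) S v v
          simp only [smul_eq_mul]
          rw [← h5, hA0]
          simp
        rw [hzero] at hc
        simp only [smul_eq_mul] at hc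
        simp_rw [Finset.mul_sum, ← mul_assoc]
        exact hc.symm
      have hT2 : ∑ i ∈ Finset.range (m + 1), ∑ j ∈ Finset.range (m + 1),
          Q.coeff i * (if j = n then t else 0) * (v ⬝ᵥ (S (i + j)).mulVec u)
          = t * (u ⬝ᵥ T.mulVec v) := by
        have inner : ∀ i, ∑ j ∈ Finset.range (m + 1),
            Q.coeff i * (if j = n then t else 0) * (v ⬝ᵥ (S (i + j)).mulVec u)
            = Q.coeff i * t * (v ⬝ᵥ (S (i + n)).mulVec u) := by
          intro i
          rw [Finset.sum_eq_single n]
          · simp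
          · intro b _ hb; simp [hb]
          · intro hc; exact absurd hnmem hc
        simp_rw [inner]
        rw [hB, Finset.mul_sum]
        refine Finset.sum_congr rfl fun i _ => ?_
        rw [symm_dot (hsym (i + n)) v u, add_comm i n]
        ring
      have hT3 : ∑ i ∈ Finset.range (m + 1), ∑ j ∈ Finset.range (m + 1),
          (if i = n then t else 0) * Q.coeff j * (u ⬝ᵥ (S (i + j)).mulVec v)
          = t * (u ⬝ᵥ T.mulVec v) := by
        rw [Finset.sum_eq_single n]
        · rw [hB, Finset.mul_sum]
          refine Finset.sum_congr rfl fun j _ => ?_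
          rw [if_pos rfl]
          ring
        · intro b _ hb
          refine Finset.sum_eq_zero fun j _ => ?_
          simp [hb]
        · intro hc; exact absurd hnmem hc
      have hT4 : ∑ i ∈ Finset.range (m + 1), ∑ j ∈ Finset.range (m + 1),
          (if i = n then t else 0) * (if j = n then t else 0)
            * (u ⬝ᵥ (S (i + j)).mulVec u)
          = (u ⬝ᵥ (S (n + n)).mulVec u) * (t * t) := by
        rw [Finset.sum_eq_single n]
        · rw [Finset.sum_eq_single n]
          · rw [if_pos rfl]; ring
          · intro b _ hb; simp [hb]
          · intro hc; exact absurd hnmem hc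
        · intro b _ hb
          refine Finset.sum_eq_zero fun j _ => ?_
          simp [hb]
        · intro hc; exact absurd hnmem hc
      rw [hT1, hT2, hT3, hT4] at this
      linarith
    have hdisc := discrim_le_zero main
    have : discrim (u ⬝ᵥ (S (n + n)).mulVec u) (2 * (u ⬝ᵥ T.mulVec v)) 0
        = (2 * (u ⬝ᵥ T.mulVec v)) ^ 2 := by
      simp [discrim]
    rw [this] at hdisc
    nlinarith [sq_nonneg (u ⬝ᵥ T.mulVec v)]
  -- shrink range
  have := sum_ext' Q (fun k => S (n + k)) (Nat.lt_succ_of_le (by omega : d ≤ m))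
  rw [hT] at hTzero
  rw [← this]
  exact hTzero

end Main

/-- For a recursive sequence of symmetric matrices whose block Hankel forms are
all positive semidefinite, a power `Pⁿ` (`n ≥ 1`) annihilates `S` iff `P`
annihilates `S`. -/
theorem pow_annihilates_iff (p r : ℕ)
    (S : ℕ → Matrix (Fin p) (Fin p) ℝ) (hsym : ∀ n, (S n).IsSymm)
    (hrec : ∃ a : Fin r → ℝ, ∀ n, S (n + r) = ∑ i, a i • S (n + i.1))
    (hH : ∀ m : ℕ, ∀ c : Fin (m + 1) → Fin p → ℝ,
      0 ≤ ∑ i, ∑ j, c i ⬝ᵥ (S (i.1 + j.1)).mulVec (c j)) :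
    ∀ (P : Polynomial ℝ) (n : ℕ), 1 ≤ n → (AnnM S (P ^ n) ↔ AnnM S P) := by
  intro P n hn
  constructor
  · induction n, hn using Nat.le_induction with
    | base => intro h; rwa [pow_one] at h
    | succ n hn ih =>
      intro h
      apply ih
      have h1 : AnnM S (P ^ (n - 1) * P ^ (n + 1)) := annM_mul S h _
      rw [← pow_add] at h1
      have : n - 1 + (n + 1) = n * 2 := by omega
      rw [this, pow_mul] at h1
      exact annM_of_annM_sq S hsym hH h1
  · intro h
    have : P ^ n = P ^ (n - 1) * P := by
      rw [← pow_succ]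
      congr 1
      omega
    rw [this]
    exact annM_mul S h _
end

section
/- Let S = (Sₙ) be a sequence of real symmetric p×p matrices satisfying a linear recurrence of order r. If all block Hankel matrices H(m) = (S_{i+j})_{0≤i,j≤m} are positive semidefinite, then the minimal polynomial P_S of S has only simple roots. -/
open Polynomial Matrix

/-- The linear functional attached to a scalar sequence. -/
noncomputable def Lseq (s : ℕ → ℝ) (f : Polynomial ℝ) : ℝ := f.sum fun n a => a * s n

lemma Lseq_zero (s : ℕ → ℝ) : Lseq s 0 = 0 := by simp [Lseq]

lemma Lseq_add (s : ℕ → ℝ) (f g : Polynomial ℝ) :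
    Lseq s (f + g) = Lseq s f + Lseq s g :=
  Polynomial.sum_add_index f g _ (by simp) (by intros; ring)

lemma Lseq_sum (s : ℕ → ℝ) {ι : Type*} (t : Finset ι) (F : ι → Polynomial ℝ) :
    Lseq s (∑ i ∈ t, F i) = ∑ i ∈ t, Lseq s (F i) := by
  induction t using Finset.cons_induction with
  | empty => simp [Lseq]
  | cons a t ha ih => rw [Finset.sum_cons, Finset.sum_cons, Lseq_add, ih]

lemma Lseq_range (s : ℕ → ℝ) (f : Polynomial ℝ) {N : ℕ} (h : f.natDegree < N) :
    Lseq s f = ∑ k ∈ Finset.range N, f.coeff k * s k :=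
  Polynomial.sum_over_range' f (by simp) N h

lemma Lseq_C_mul (s : ℕ → ℝ) (a : ℝ) (f : Polynomial ℝ) :
    Lseq s (C a * f) = a * Lseq s f := by
  rw [Lseq_range s (C a * f)
      (lt_of_le_of_lt (natDegree_C_mul_le a f) (Nat.lt_succ_self _)),
    Lseq_range s f (Nat.lt_succ_self _), Finset.mul_sum]
  exact Finset.sum_congr rfl fun k _ => by rw [coeff_C_mul, mul_assoc]

lemma Lseq_X_pow_mul (s : ℕ → ℝ) (n : ℕ) (f : Polynomial ℝ) :
    Lseq s (X ^ n * f) = ∑ k ∈ Finset.range (f.natDegree + 1), f.coeff k * s (n + k) := by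
  have hd : (X ^ n * f).natDegree < n + (f.natDegree + 1) := by
    have := natDegree_mul_le (p := (X : Polynomial ℝ) ^ n) (q := f)
    rw [natDegree_X_pow] at this
    omega
  rw [Lseq_range s _ hd, Finset.sum_range_add]
  have h0 : ∑ k ∈ Finset.range n, (X ^ n * f).coeff k * s k = 0 := by
    apply Finset.sum_eq_zero
    intro k hk
    rw [mul_comm ((X : Polynomial ℝ) ^ n) f, coeff_mul_X_pow', if_neg (by
      exact not_le.mpr (Finset.mem_range.mp hk)), zero_mul]
  rw [h0, zero_add]
  apply Finset.sum_congr rfl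
  intro k _
  have : (X ^ n * f).coeff (n + k) = f.coeff k := by
    rw [add_comm]; exact coeff_X_pow_mul f n k
  rw [this]

lemma Lseq_mul (s : ℕ → ℝ) (f g : Polynomial ℝ) :
    Lseq s (f * g) = ∑ i ∈ Finset.range (f.natDegree + 1),
      ∑ j ∈ Finset.range (g.natDegree + 1), f.coeff i * g.coeff j * s (i + j) := by
  conv_lhs => rw [f.as_sum_range' (f.natDegree + 1) (Nat.lt_succ_self _), Finset.sum_mul]
  rw [Lseq_sum]
  apply Finset.sum_congr rfl
  intro i _
  have h1 : (monomial i (f.coeff i)) * g = C (f.coeff i) * (X ^ i * g) := by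
    rw [← C_mul_X_pow_eq_monomial, mul_assoc]
  rw [h1, Lseq_C_mul, Lseq_X_pow_mul, Finset.mul_sum]
  exact Finset.sum_congr rfl fun j _ => by ring

/-- Cauchy–Schwarz style degeneracy: if all squares are nonnegative and
`L (f * f) = 0`, then `L f = 0`. -/
lemma Lseq_eq_zero_of_sq (s : ℕ → ℝ) (hpos : ∀ h : Polynomial ℝ, 0 ≤ Lseq s (h * h))
    {f : Polynomial ℝ} (hf : Lseq s (f * f) = 0) : Lseq s f = 0 := by
  by_contra ha
  have key : ∀ t : ℝ, 0 ≤ 2 * t * Lseq s f + Lseq s 1 := by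
    intro t
    have h := hpos (C t * f + 1)
    have hexp : (C t * f + 1) * (C t * f + 1) =
        C t * (C t * (f * f)) + (C t * f + (C t * f + 1)) := by ring
    rw [hexp, Lseq_add, Lseq_add, Lseq_add, Lseq_C_mul, Lseq_C_mul, Lseq_C_mul,
      hf] at h
    nlinarith [h]
  have h1 := key (-(Lseq s 1 + 1) / (2 * Lseq s f))
  have h2 : 2 * (-(Lseq s 1 + 1) / (2 * Lseq s f)) * Lseq s f = -(Lseq s 1 + 1) := by
    field_simp
  rw [h2] at h1
  linarith

/-- quadratic form of a finite sum of matrices -/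
lemma quad_sum {p : ℕ} (c : Fin p → ℝ) {ι : Type*} (t : Finset ι)
    (M : ι → Matrix (Fin p) (Fin p) ℝ) :
    c ⬝ᵥ (∑ k ∈ t, M k).mulVec c = ∑ k ∈ t, c ⬝ᵥ (M k).mulVec c := by
  induction t using Finset.cons_induction with
  | empty => simp
  | cons a t ha ih => rw [Finset.sum_cons, Finset.sum_cons, Matrix.add_mulVec,
      dotProduct_add, ih]

/-- If all block Hankel matrices of a recursive sequence of symmetric matrices
are positive semidefinite, then its minimal polynomial is squarefree (has only
simple roots). -/
theorem minimalPoly_squarefree_of_hankel_psd (p r : ℕ)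
    (S : ℕ → Matrix (Fin p) (Fin p) ℝ) (hsym : ∀ n, (S n).IsSymm)
    (hrec : ∃ a : Fin r → ℝ, ∀ n, S (n + r) = ∑ i, a i • S (n + i.1))
    (hH : ∀ m : ℕ, ∀ c : Fin (m + 1) → Fin p → ℝ,
      0 ≤ ∑ i, ∑ j, c i ⬝ᵥ (S (i.1 + j.1)).mulVec (c j))
    (PS : Polynomial ℝ) (hPSmonic : PS.Monic)
    (hPSgen : ∀ Q : Polynomial ℝ, AnnM S Q ↔ PS ∣ Q) :
    Squarefree PS := by
  intro Q hQ
  by_contra hQu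
  obtain ⟨R, hR⟩ := hQ
  have hPS0 : PS ≠ 0 := hPSmonic.ne_zero
  have hQ0 : Q ≠ 0 := by rintro rfl; simp at hR; exact hPS0 hR
  have hR0 : R ≠ 0 := by rintro rfl; simp at hR; exact hPS0 hR
  have hQdeg : 1 ≤ Q.natDegree := by
    rcases Nat.eq_zero_or_pos Q.natDegree with h | h
    · exfalso
      apply hQu
      rw [eq_C_of_natDegree_eq_zero h]
      refine isUnit_C.mpr (isUnit_iff_ne_zero.mpr fun hc => hQ0 ?_)
      rw [eq_C_of_natDegree_eq_zero h, hc, map_zero]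
    · exact h
  set P' : Polynomial ℝ := Q * R with hP'
  have hP'0 : P' ≠ 0 := mul_ne_zero hQ0 hR0
  -- the scalar sequences attached to vectors are p.s.d. sequences
  have hAnnPS : AnnM S PS := (hPSgen PS).mpr dvd_rfl
  -- main claim : P' annihilates S
  have hAnnP' : AnnM S P' := by
    intro n
    -- scalar statement for every vector c
    have key : ∀ c : Fin p → ℝ,
        ∑ k ∈ Finset.range (P'.natDegree + 1),
          P'.coeff k * (c ⬝ᵥ (S (n + k)).mulVec c) = 0 := by
      intro c
      set s : ℕ → ℝ := fun m => c ⬝ᵥ (S m).mulVec c with hs_def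
      -- positivity of squares
      have hpos : ∀ h : Polynomial ℝ, 0 ≤ Lseq s (h * h) := by
        intro h
        rw [Lseq_mul]
        have := hH h.natDegree (fun i => h.coeff i.1 • c)
        rw [Finset.sum_range fun i => ∑ j ∈ Finset.range (h.natDegree + 1),
          h.coeff i * h.coeff j * s (i + j)]
        refine le_trans this (le_of_eq ?_)
        apply Finset.sum_congr rfl
        intro i _
        rw [Finset.sum_range fun j => h.coeff i.1 * h.coeff j * s (i.1 + j)]
        apply Finset.sum_congr rfl
        intro j _
        rw [Matrix.mulVec_smul, smul_dotProduct, dotProduct_smul]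
        simp [hs_def, mul_assoc]
      -- L vanishes on multiples of PS
      have hX : ∀ m : ℕ, Lseq s (X ^ m * PS) = 0 := by
        intro m
        rw [Lseq_X_pow_mul]
        have hz := hAnnPS m
        calc ∑ k ∈ Finset.range (PS.natDegree + 1), PS.coeff k * s (m + k)
            = ∑ k ∈ Finset.range (PS.natDegree + 1),
                c ⬝ᵥ ((PS.coeff k • S (m + k)).mulVec c) := by
              apply Finset.sum_congr rfl
              intro k _
              rw [Matrix.smul_mulVec, dotProduct_smul, smul_eq_mul]
          _ = c ⬝ᵥ ((∑ k ∈ Finset.range (PS.natDegree + 1),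
                PS.coeff k • S (m + k)).mulVec c) := (quad_sum c _ _).symm
          _ = 0 := by rw [hz]; simp
      have hann : ∀ h : Polynomial ℝ, Lseq s (PS * h) = 0 := by
        intro h
        conv_lhs => rw [h.as_sum_range' (h.natDegree + 1) (Nat.lt_succ_self _),
          Finset.mul_sum, Lseq_sum]
        apply Finset.sum_eq_zero
        intro i _
        have h1 : PS * (monomial i (h.coeff i)) = C (h.coeff i) * (X ^ i * PS) := by
          rw [← C_mul_X_pow_eq_monomial]; ring
        rw [h1, Lseq_C_mul, hX i, mul_zero]
      -- the square of X^n * P' lies in the ideal of PS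
      have hsq : Lseq s ((X ^ n * P') * (X ^ n * P')) = 0 := by
        have h1 : (X ^ n * P') * (X ^ n * P') = PS * (X ^ n * X ^ n * R) := by
          rw [hP', hR]; ring
        rw [h1]; exact hann _
      have hfin := Lseq_eq_zero_of_sq s hpos hsq
      rwa [Lseq_X_pow_mul] at hfin
    -- polarization: deduce the matrix identity
    set A : Matrix (Fin p) (Fin p) ℝ :=
      ∑ k ∈ Finset.range (P'.natDegree + 1), P'.coeff k • S (n + k) with hA
    have hAentry : ∀ i j : Fin p,
        A i j = ∑ k ∈ Finset.range (P'.natDegree + 1),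
          P'.coeff k * (S (n + k) i j) := by
      intro i j
      rw [hA, Matrix.sum_apply]
      exact Finset.sum_congr rfl fun k _ => by simp [smul_eq_mul]
    have hdiag : ∀ i : Fin p, A i i = 0 := by
      intro i
      have h := key (Pi.single i 1)
      rw [hAentry]
      rw [← h]
      apply Finset.sum_congr rfl
      intro k _
      congr 1
      simp [Matrix.mulVec_single, single_dotProduct]
    have hoff : ∀ i j : Fin p, A i j = 0 := by
      intro i j
      have h := key (Pi.single i 1 + Pi.single j 1)
      have hexp : ∀ m : ℕ,
          (Pi.single i 1 + Pi.single j 1) ⬝ᵥ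
            (S m).mulVec (Pi.single i 1 + Pi.single j 1) =
          S m i i + S m i j + S m j i + S m j j := by
        intro m
        simp only [Matrix.mulVec_add, add_dotProduct, dotProduct_add,
          Matrix.mulVec_single, single_dotProduct]
        simp
        ring
      have hsum : A i i + A i j + (A j i + A j j) = 0 := by
        rw [hAentry, hAentry, hAentry, hAentry, ← Finset.sum_add_distrib,
          ← Finset.sum_add_distrib, ← Finset.sum_add_distrib, ← h]
        apply Finset.sum_congr rfl
        intro k _
        rw [hexp (n + k)]
        ring
      have hji : A j i = A i j := by
        rw [hAentry, hAentry]
        exact Finset.sum_congr rfl fun k _ => by rw [(hsym (n + k)).apply i j]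
      rw [hdiag i, hdiag j, hji] at hsum
      linarith
    ext i j
    exact hoff i j
  -- derive the degree contradiction
  have hdvd : PS ∣ P' := (hPSgen P').mp hAnnP'
  have hle := Polynomial.natDegree_le_of_dvd hdvd hP'0
  have hdegPS : PS.natDegree = Q.natDegree + Q.natDegree + R.natDegree := by
    rw [hR, natDegree_mul (mul_ne_zero hQ0 hQ0) hR0, natDegree_mul hQ0 hQ0]
  have hdegP' : P'.natDegree = Q.natDegree + R.natDegree := natDegree_mul hQ0 hR0
  omega
end

section
/- Let λ₀,…,λ_{r−1} be distinct real numbers and T₀,…,T_{r−1} real symmetric p×p matrices with Sₙ = ∑_q T_q λ_qⁿ, and suppose ∑_{i,j=0}^{r−1} cᵢᵀ S_{i+j} c_j ≥ 0 for all c₀,…,c_{r−1} ∈ ℝᵖ. Then each T_q is positive semidefinite. -/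
open Matrix

private lemma dotProduct_finsum {p r : ℕ} (w : Fin p → ℝ) (f : Fin r → Fin p → ℝ) :
    w ⬝ᵥ (∑ q', f q') = ∑ q', w ⬝ᵥ f q' := by
  simp only [dotProduct, Finset.sum_apply, Finset.mul_sum]
  exact Finset.sum_comm

private lemma finsum_mulVec {p r : ℕ} (A : Fin r → Matrix (Fin p) (Fin p) ℝ)
    (w : Fin p → ℝ) : (∑ q', A q') *ᵥ w = ∑ q', A q' *ᵥ w := by
  ext k
  simp only [Matrix.mulVec, dotProduct, Matrix.sum_apply, Finset.sum_mul]
  rw [Finset.sum_comm]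
  simp [Matrix.mulVec, dotProduct, Finset.sum_apply]

/-- If `Sₙ = ∑_q λ_qⁿ • T_q` with distinct `λ_q` and symmetric `T_q`, and the
block Hankel form of order `r−1` is nonnegative, then each `T_q` is positive
semidefinite. -/
theorem weights_psd_of_hankel_psd (p r : ℕ)
    (lam : Fin r → ℝ) (hlam : Function.Injective lam)
    (T : Fin r → Matrix (Fin p) (Fin p) ℝ) (hTsym : ∀ q, (T q).IsSymm)
    (S : ℕ → Matrix (Fin p) (Fin p) ℝ)
    (hrep : ∀ n, S n = ∑ q, lam q ^ n • T q)
    (hH : ∀ c : Fin r → Fin p → ℝ,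
      0 ≤ ∑ i, ∑ j, c i ⬝ᵥ (S (i.1 + j.1)).mulVec (c j)) :
    ∀ q, (T q).PosSemidef := by
  intro q
  have hinj : Set.InjOn lam ↑(Finset.univ : Finset (Fin r)) := hlam.injOn
  set P := Lagrange.basis Finset.univ lam q with hP
  have hr : 0 < r := q.pos
  have hdeg : P.natDegree < r := by
    rw [hP, Lagrange.natDegree_basis hinj (Finset.mem_univ q), Finset.card_fin]
    omega
  have key : ∀ q', ∑ i : Fin r, P.coeff i * lam q' ^ (i : ℕ)
      = if q' = q then 1 else 0 := by
    intro q'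
    have heval := Polynomial.eval_eq_sum_range' hdeg (lam q')
    rw [Fin.sum_univ_eq_sum_range (fun i => P.coeff i * lam q' ^ i), ← heval]
    by_cases h : q' = q
    · subst h
      simp [hP, Lagrange.eval_basis_self hinj (Finset.mem_univ q')]
    · rw [hP, Lagrange.eval_basis_of_ne (fun he => h he.symm) (Finset.mem_univ q')]
      simp [h]
  rw [Matrix.posSemidef_iff_dotProduct_mulVec]
  refine ⟨?_, ?_⟩
  · rw [Matrix.IsHermitian]
    ext i j
    simpa using congrFun (congrFun (hTsym q) i) j
  · intro v
    have H := hH (fun i => P.coeff i • v)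
    have hterm : ∀ i j : Fin r,
        (P.coeff i.1 • v) ⬝ᵥ (S (i.1 + j.1)).mulVec (P.coeff j.1 • v)
        = ∑ q' : Fin r, (P.coeff i.1 * lam q' ^ (i : ℕ)) *
            ((P.coeff j.1 * lam q' ^ (j : ℕ)) * (v ⬝ᵥ (T q').mulVec v)) := by
      intro i j
      rw [hrep]
      rw [show (∑ q' : Fin r, lam q' ^ (i.1 + j.1) • T q').mulVec (P.coeff j.1 • v)
            = ∑ q' : Fin r, (lam q' ^ (i.1 + j.1) • T q').mulVec (P.coeff j.1 • v) from
          finsum_mulVec _ _]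
      rw [dotProduct_finsum]
      refine Finset.sum_congr rfl fun q' _ => ?_
      simp only [Matrix.smul_mulVec, Matrix.mulVec_smul, smul_dotProduct,
        dotProduct_smul, smul_eq_mul, pow_add]
      ring
    have hsum : ∑ i : Fin r, ∑ j : Fin r,
        (P.coeff i.1 • v) ⬝ᵥ (S (i.1 + j.1)).mulVec (P.coeff j.1 • v)
        = v ⬝ᵥ (T q).mulVec v := by
      calc ∑ i : Fin r, ∑ j : Fin r,
              (P.coeff i.1 • v) ⬝ᵥ (S (i.1 + j.1)).mulVec (P.coeff j.1 • v)
          = ∑ i : Fin r, ∑ j : Fin r, ∑ q' : Fin r,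
              (P.coeff i.1 * lam q' ^ (i : ℕ)) *
                ((P.coeff j.1 * lam q' ^ (j : ℕ)) * (v ⬝ᵥ (T q').mulVec v)) :=
            Finset.sum_congr rfl fun i _ => Finset.sum_congr rfl fun j _ => hterm i j
        _ = ∑ i : Fin r, ∑ q' : Fin r, ∑ j : Fin r,
              (P.coeff i.1 * lam q' ^ (i : ℕ)) *
                ((P.coeff j.1 * lam q' ^ (j : ℕ)) * (v ⬝ᵥ (T q').mulVec v)) :=
            Finset.sum_congr rfl fun i _ => Finset.sum_comm
        _ = ∑ q' : Fin r, ∑ i : Fin r, ∑ j : Fin r,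
              (P.coeff i.1 * lam q' ^ (i : ℕ)) *
                ((P.coeff j.1 * lam q' ^ (j : ℕ)) * (v ⬝ᵥ (T q').mulVec v)) :=
            Finset.sum_comm
        _ = ∑ q' : Fin r, (∑ i : Fin r, P.coeff i.1 * lam q' ^ (i : ℕ)) *
              ((∑ j : Fin r, P.coeff j.1 * lam q' ^ (j : ℕ)) *
                (v ⬝ᵥ (T q').mulVec v)) := by
            refine Finset.sum_congr rfl fun q' _ => ?_
            rw [Finset.sum_mul]
            refine Finset.sum_congr rfl fun i _ => ?_
            rw [Finset.sum_mul, Finset.mul_sum]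
        _ = v ⬝ᵥ (T q).mulVec v := by
            simp [key]
    rw [hsum] at H
    simpa using H
end

section
/- There exists a sequence of 2×2 real symmetric matrices (Sₙ) such that every entry sequence (s_{ij}^{(n)})ₙ is a scalar Hamburger moment sequence (admits a nonnegative representing measure on ℝ), but (Sₙ) itself is not a matrix moment sequence; for example Sₙ with entries s₁₁ = 1+2ⁿ, s₁₂ = s₂₁ = 1+3·2ⁿ, s₂₂ = 2ⁿ fails, since Sₙ = A·1ⁿ + B·2ⁿ with A = [[1,1],[1,0]], B = [[1,3],[3,1]] not positive semidefinite, and indeed the block Hankel matrix (S_{i+j})_{0≤i,j≤1} is not positive semidefinite. -/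
open Matrix MeasureTheory
open scoped ENNReal

lemma my_integrable_dirac (f : ℝ → ℝ) (hf : Measurable f) (a : ℝ) :
    Integrable f (Measure.dirac a) :=
  ⟨hf.aestronglyMeasurable, by
    simp [HasFiniteIntegral, MeasureTheory.lintegral_dirac]⟩

/-- There is a sequence of 2×2 real symmetric matrices whose entry sequences
are all scalar Hamburger moment sequences, yet which is not a matrix moment
sequence: the block Hankel matrix `H(1) = (S_{i+j})_{0≤i,j≤1}` fails to be
positive semidefinite. -/
theorem entrywise_moment_not_matrix_moment :
    ∃ S : ℕ → Matrix (Fin 2) (Fin 2) ℝ,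
      (∀ n, S n = !![1 + 2 ^ n, 1 + 3 * 2 ^ n; 1 + 3 * 2 ^ n, (2 : ℝ) ^ n]) ∧
      (∀ n, (S n).IsSymm) ∧
      (∀ i j : Fin 2, ∃ μ : Measure ℝ,
        ∀ n : ℕ, Integrable (fun x : ℝ => x ^ n) μ ∧ S n i j = ∫ x, x ^ n ∂μ) ∧
      (∃ c : Fin 2 → Fin 2 → ℝ,
        ∑ i, ∑ j, c i ⬝ᵥ (S (i.1 + j.1)).mulVec (c j) < 0) := by
  refine ⟨fun n => !![1 + 2 ^ n, 1 + 3 * 2 ^ n; 1 + 3 * 2 ^ n, (2 : ℝ) ^ n],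
    fun n => rfl, ?_, ?_, ?_⟩
  · intro n
    ext i j
    fin_cases i <;> fin_cases j <;> simp [Matrix.IsSymm]
  · intro i j
    have hmeas : ∀ n : ℕ, Measurable (fun x : ℝ => x ^ n) := fun n => measurable_id.pow_const n
    fin_cases i <;> fin_cases j
    · refine ⟨Measure.dirac 1 + Measure.dirac 2, fun n => ⟨?_, ?_⟩⟩
      · exact (my_integrable_dirac _ (hmeas n) 1).add_measure (my_integrable_dirac _ (hmeas n) 2)
      · rw [integral_add_measure (my_integrable_dirac _ (hmeas n) 1)
          (my_integrable_dirac _ (hmeas n) 2), integral_dirac, integral_dirac]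
        simp
    · refine ⟨Measure.dirac 1 + (3 : ℝ≥0∞) • Measure.dirac 2, fun n => ⟨?_, ?_⟩⟩
      · exact (my_integrable_dirac _ (hmeas n) 1).add_measure
          ((integrable_smul_measure (by norm_num) (by norm_num)).mpr
            (my_integrable_dirac _ (hmeas n) 2))
      · rw [integral_add_measure (my_integrable_dirac _ (hmeas n) 1)
          ((integrable_smul_measure (by norm_num) (by norm_num)).mpr
            (my_integrable_dirac _ (hmeas n) 2)),
          integral_smul_measure, integral_dirac, integral_dirac]
        simp
    · refine ⟨Measure.dirac 1 + (3 : ℝ≥0∞) • Measure.dirac 2, fun n => ⟨?_, ?_⟩⟩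
      · exact (my_integrable_dirac _ (hmeas n) 1).add_measure
          ((integrable_smul_measure (by norm_num) (by norm_num)).mpr
            (my_integrable_dirac _ (hmeas n) 2))
      · rw [integral_add_measure (my_integrable_dirac _ (hmeas n) 1)
          ((integrable_smul_measure (by norm_num) (by norm_num)).mpr
            (my_integrable_dirac _ (hmeas n) 2)),
          integral_smul_measure, integral_dirac, integral_dirac]
        simp
    · refine ⟨Measure.dirac 2, fun n => ⟨my_integrable_dirac _ (hmeas n) 2, ?_⟩⟩
      rw [integral_dirac]
      simp
  · refine ⟨fun i => if i = 0 then ![1, -1] else ![0, 0], ?_⟩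
    simp [Fin.sum_univ_two, Matrix.mulVec, dotProduct, Fin.sum_univ_two]
    norm_num
end
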